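/- Let G be a bipanpositionable graph with at least 4 vertices and let a, b, c, d be the vertices of a 4-cycle in G (edges ab, ac, bd, cd). Then W = {a, b, c, d} is path-closed: for every u ∈ W and every positive integer l, if there is a path of length l in G starting at u, then there is a path of length l from u to some vertex of W. -/

import Mathlib

/-- A Hamiltonian bipartite graph `G` is *bipanpositionable* if for any two distinct
vertices `x, y` and any `k` with `dist(x,y) ≤ k ≤ |V(G)|/2` and `k - dist(x,y)` even,
some Hamiltonian cycle `C` of `G` has `dist_C(x,y) = k`; here such a Hamiltonian cycle
is encoded by its two arcs between `x` and `y`: internally disjoint paths of lengths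
`k` and `|V(G)| - k` which together cover all vertices. -/
def Bipanpositionable {V : Type*} [Fintype V] [DecidableEq V] (G : SimpleGraph V) : Prop :=
  G.Colorable 2 ∧ (∃ (a : V) (C : G.Walk a a), C.IsHamiltonianCycle) ∧
  ∀ x y : V, x ≠ y → ∀ k : ℕ, G.dist x y ≤ k → 2 * k ≤ Fintype.card V →
    Even (k - G.dist x y) →
    ∃ p q : G.Walk x y, p.IsPath ∧ q.IsPath ∧
      p.length = k ∧ q.length = Fintype.card V - k ∧
      (∀ v : V, v ∈ p.support ∨ v ∈ q.support) ∧
      (∀ v : V, v ∈ p.support → v ∈ q.support → v = x ∨ v = y)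

lemma walk_parity' {V : Type*} {G : SimpleGraph V} (f : G.Coloring (Fin 2)) {u v : V}
    (p : G.Walk u v) : Even p.length ↔ f u = f v := by
  induction p with
  | nil => simp
  | @cons u w v h p ih =>
    have h1 : (f u).val ≠ (f w).val := fun hh => (f.valid h) (Fin.ext hh)
    have h2 := (f u).isLt
    have h3 := (f w).isLt
    have h4 := (f v).isLt
    rw [SimpleGraph.Walk.length_cons, Nat.even_add_one, ih, Fin.ext_iff, Fin.ext_iff]
    omega

lemma card_even' {V : Type*} [Fintype V] [DecidableEq V] (G : SimpleGraph V)
    (hG : Bipanpositionable G) : Even (Fintype.card V) := by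
  obtain ⟨f⟩ := hG.1
  obtain ⟨a, C, hC⟩ := hG.2.1
  have := (walk_parity' f C).mpr rfl
  rwa [hC.length_eq] at this

lemma aux_path' {V : Type*} [Fintype V] [DecidableEq V] (G : SimpleGraph V)
    (hG : Bipanpositionable G) (x y : V) (hxy : x ≠ y) (l : ℕ) (hl : 0 < l)
    (hdl : G.dist x y ≤ l) (hdl2 : G.dist x y ≤ Fintype.card V - l)
    (hlN : l ≤ Fintype.card V - 1)
    (hpar : Even (l - G.dist x y)) :
    ∃ p : G.Walk x y, p.IsPath ∧ p.length = l := by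
  set N := Fintype.card V with hN
  have hN2 : 2 ≤ N := by omega
  by_cases hc : 2 * l ≤ N
  · obtain ⟨p, q, hp, hq, hpl, _⟩ := hG.2.2 x y hxy l hdl hc hpar
    exact ⟨p, hp, hpl⟩
  · have hNeven := card_even' G hG
    have hk2 : 2 * (N - l) ≤ N := by omega
    have hke : Even ((N - l) - G.dist x y) := by
      rw [Nat.even_sub hdl] at hpar
      rw [Nat.even_sub hdl2]
      have hNl : Even (N - l) ↔ Even l := by
        rw [Nat.even_sub (show l ≤ N by omega)]
        simp [show Even N from hNeven]
      rw [hNl]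
      exact hpar
    obtain ⟨p, q, hp, hq, hpl, hql, _⟩ := hG.2.2 x y hxy (N - l) hdl2 hk2 hke
    exact ⟨q, hq, by rw [hql]; omega⟩

lemma key_path' {V : Type*} [Fintype V] [DecidableEq V] (G : SimpleGraph V)
    (hG : Bipanpositionable G) (u w1 w2 : V)
    (h1 : G.Adj u w1) (hd2 : G.dist u w2 = 2) (hne2 : u ≠ w2) (l : ℕ)
    (hl : 0 < l) (hlN : l ≤ Fintype.card V - 1) :
    (∃ p : G.Walk u w1, p.IsPath ∧ p.length = l) ∨
      (∃ p : G.Walk u w2, p.IsPath ∧ p.length = l) := by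
  obtain ⟨m, hm⟩ := card_even' G hG
  rcases Nat.even_or_odd l with he | ho
  · right
    obtain ⟨j, hj⟩ := he
    refine aux_path' G hG u w2 hne2 l hl ?_ ?_ hlN ?_
    · rw [hd2]; omega
    · rw [hd2]; omega
    · rw [hd2]; exact ⟨j - 1, by omega⟩
  · left
    obtain ⟨j, hj⟩ := ho
    have hd1 : G.dist u w1 = 1 := SimpleGraph.dist_eq_one_iff_adj.mpr h1
    refine aux_path' G hG u w1 h1.ne l hl ?_ ?_ hlN ?_
    · rw [hd1]; omega
    · rw [hd1]; omega
    · rw [hd1]; exact ⟨j, by omega⟩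

lemma dist_eq_two' {V : Type*} (G : SimpleGraph V) {u x v : V}
    (h1 : G.Adj u x) (h2 : G.Adj x v) (hne : u ≠ v) (hna : ¬ G.Adj u v) :
    G.dist u v = 2 := by
  have hw : G.dist u v ≤ 2 := by
    simpa using SimpleGraph.dist_le (SimpleGraph.Walk.cons h1 (SimpleGraph.Walk.cons h2 SimpleGraph.Walk.nil))
  have h0 : G.dist u v ≠ 0 := fun h =>
    hne ((SimpleGraph.Reachable.dist_eq_zero_iff
      ⟨SimpleGraph.Walk.cons h1 (SimpleGraph.Walk.cons h2 SimpleGraph.Walk.nil)⟩).mp h)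
  have hone : G.dist u v ≠ 1 := fun h => hna (SimpleGraph.dist_eq_one_iff_adj.mp h)
  omega

/-- A nonempty set `U` of vertices of `G` is *path-closed* when for every `u ∈ U`
and every positive `l`, if some vertex is reachable from `u` by a path of length `l`,
then some vertex of `U` is reachable from `u` by a path of length `l`. -/
theorem four_cycle_path_closed {V : Type*} [Fintype V] [DecidableEq V]
    (G : SimpleGraph V) (hG : Bipanpositionable G) (h4 : 4 ≤ Fintype.card V)
    (a b c d : V)
    (hab : G.Adj a b) (hac : G.Adj a c) (hbd : G.Adj b d) (hcd : G.Adj c d)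
    (had : a ≠ d) (hbc : b ≠ c) :
    ∀ u ∈ ({a, b, c, d} : Set V), ∀ l : ℕ, 0 < l →
      (∃ (v : V) (p : G.Walk u v), p.IsPath ∧ p.length = l) →
      ∃ x ∈ ({a, b, c, d} : Set V), ∃ p : G.Walk u x, p.IsPath ∧ p.length = l := by
  intro u hu l hl ⟨v, p0, hp0, hp0l⟩
  have hlN : l ≤ Fintype.card V - 1 := by
    have := hp0.length_lt
    omega
  obtain ⟨f⟩ := hG.1
  -- color facts
  have hval : ∀ {x y : V}, G.Adj x y → (f x).val ≠ (f y).val :=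
    fun h hh => (f.valid h) (Fin.ext hh)
  have hfa := (f a).isLt; have hfb := (f b).isLt
  have hfc := (f c).isLt; have hfd := (f d).isLt
  have hnad : ¬ G.Adj a d := fun h => hval h (by have := hval hab; have := hval hbd; omega)
  have hnbc : ¬ G.Adj b c := fun h => hval h (by have := hval hab; have := hval hac; omega)
  have hdad : G.dist a d = 2 := dist_eq_two' G hab hbd had hnad
  have hdbc : G.dist b c = 2 := dist_eq_two' G hab.symm hac hbc hnbc
  have hdda : G.dist d a = 2 := by rwa [SimpleGraph.dist_comm] at hdad
  have hdcb : G.dist c b = 2 := by rwa [SimpleGraph.dist_comm] at hdbc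
  simp only [Set.mem_insert_iff, Set.mem_singleton_iff] at hu
  rcases hu with rfl | rfl | rfl | rfl
  · rcases key_path' G hG u b d hab hdad had l hl hlN with ⟨p, hp, hpl⟩ | ⟨p, hp, hpl⟩
    · exact ⟨b, by simp, p, hp, hpl⟩
    · exact ⟨d, by simp, p, hp, hpl⟩
  · rcases key_path' G hG u a c hab.symm hdbc hbc l hl hlN with ⟨p, hp, hpl⟩ | ⟨p, hp, hpl⟩
    · exact ⟨a, by simp, p, hp, hpl⟩
    · exact ⟨c, by simp, p, hp, hpl⟩
  · rcases key_path' G hG u a b hac.symm hdcb hbc.symm l hl hlN with ⟨p, hp, hpl⟩ | ⟨p, hp, hpl⟩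
    · exact ⟨a, by simp, p, hp, hpl⟩
    · exact ⟨b, by simp, p, hp, hpl⟩
  · rcases key_path' G hG u b a hbd.symm hdda had.symm l hl hlN with ⟨p, hp, hpl⟩ | ⟨p, hp, hpl⟩
    · exact ⟨b, by simp, p, hp, hpl⟩
    · exact ⟨a, by simp, p, hp, hpl⟩
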